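/- For α = 1 and v > 0, the Grushin perimeter of the minimal double bubble with vertical interface equals (9√3 + 8π)^{1/3}(3/2)^{2/3} v^{2/3}, while that of the minimal double bubble with horizontal interface equals 3(3/2)^{2/3} v^{2/3}; and since 9√3 + 8π > 27, the horizontal-interface value is strictly smaller. -/

import Mathlib

open Real MeasureTheory intervalIntegral Set


lemma cube_inj {a b : ℝ} (ha : 0 ≤ a) (hb : 0 ≤ b) (h : a^3 = b^3) : a = b := by
  rcases lt_trichotomy a b with hl | he | hg
  · exact absurd h (ne_of_lt (pow_lt_pow_left₀ hl ha three_ne_zero))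
  · exact he
  · exact absurd h.symm (ne_of_lt (pow_lt_pow_left₀ hg hb three_ne_zero))

lemma rpow13_cube {x : ℝ} (hx : 0 ≤ x) : (x ^ ((1:ℝ)/3))^3 = x := by
  rw [← Real.rpow_natCast (x ^ ((1:ℝ)/3)) 3, ← Real.rpow_mul hx]
  norm_num

lemma rpow23_cube {x : ℝ} (hx : 0 ≤ x) : (x ^ ((2:ℝ)/3))^3 = x^2 := by
  rw [← Real.rpow_natCast (x ^ ((2:ℝ)/3)) 3, ← Real.rpow_mul hx]
  norm_num


lemma integrable1 : IntervalIntegrable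
    (fun t : ℝ => (2 - t) * (1 / 2 - t) / Real.sqrt (1 - t ^ 2)) volume (-1) (1/2) := by
  have hb : IntervalIntegrable (fun t : ℝ => 32 * ((t + 1) ^ (-(1/2) : ℝ))) volume (-1) (1/2) := by
    have h0 : IntervalIntegrable (fun x : ℝ => x ^ (-(1/2) : ℝ)) volume 0 (3/2) :=
      intervalIntegrable_rpow' (by norm_num)
    have := (h0.comp_add_right 1).const_mul 32
    norm_num at this
    convert this using 2 <;> norm_num
  refine hb.mono_fun ?_ ?_
  · apply Measurable.aestronglyMeasurable
    exact ((measurable_const.sub measurable_id).mul (measurable_const.sub measurable_id)).div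
      (Real.continuous_sqrt.measurable.comp (measurable_const.sub (measurable_id.pow_const 2)))
  · rw [Filter.EventuallyLE, ae_restrict_iff' measurableSet_uIoc]
    refine ae_of_all _ fun x hx => ?_
    rw [Set.uIoc_of_le (by norm_num : (-1:ℝ) ≤ 1/2)] at hx
    obtain ⟨hx1, hx2⟩ := hx
    have h1p : (0:ℝ) < 1 + x := by linarith
    have h1m : (0:ℝ) < 1 - x := by linarith
    set s1 := Real.sqrt (1 + x) with hs1def
    set s2 := Real.sqrt (1 - x) with hs2def
    have hs1 : 0 < s1 := Real.sqrt_pos.2 h1p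
    have hs2 : 0 < s2 := Real.sqrt_pos.2 h1m
    have hsq : Real.sqrt (1 - x ^ 2) = s1 * s2 := by
      rw [show (1 : ℝ) - x ^ 2 = (1 + x) * (1 - x) by ring, Real.sqrt_mul h1p.le]
    have hrpow : (x + 1) ^ (-(1/2) : ℝ) = 1 / s1 := by
      rw [Real.rpow_neg (by linarith), ← Real.sqrt_eq_rpow, one_div, add_comm]
    have hnum : (2 - x) * (1 / 2 - x) ≤ 32 * s2 := by
      have hs2sq : s2 ^ 2 = 1 - x := Real.sq_sqrt h1m.le
      have hle2 : s2 ≤ 2 := by nlinarith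
      have hge : 1/4 ≤ s2 := by nlinarith
      nlinarith
    have hg0 : 0 ≤ (2 - x) * (1 / 2 - x) / Real.sqrt (1 - x ^ 2) := by
      apply div_nonneg (by nlinarith) (Real.sqrt_nonneg _)
    simp only [Real.norm_eq_abs]
    rw [hsq, hrpow]
    rw [abs_of_nonneg (by rw [hsq] at hg0; exact hg0),
      abs_of_nonneg (by positivity : (0:ℝ) ≤ 32 * (1 / s1))]
    rw [div_le_iff₀ (by positivity)]
    calc (2 - x) * (1 / 2 - x) ≤ 32 * s2 := hnum
      _ = 32 * (1 / s1) * (s1 * s2) := by field_simp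


noncomputable def F1 (t : ℝ) : ℝ := 3/2 * Real.arcsin t + (5/2 - t/2) * Real.sqrt (1 - t^2)

lemma integral1 : (∫ t in (-1 : ℝ)..(1/2), (2 - t) * (1/2 - t) / Real.sqrt (1 - t ^ 2))
    = Real.pi + 9 * Real.sqrt 3 / 8 := by
  have key : (∫ t in (-1 : ℝ)..(1/2), (2 - t) * (1/2 - t) / Real.sqrt (1 - t ^ 2))
      = F1 (1/2) - F1 (-1) := by
    apply integral_eq_sub_of_hasDerivAt_of_le (by norm_num)
    · -- continuity
      apply Continuous.continuousOn
      unfold F1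
      have h1 : Continuous fun t : ℝ => Real.sqrt (1 - t^2) :=
        Real.continuous_sqrt.comp (by continuity)
      continuity
    · intro x hx
      obtain ⟨hx1, hx2⟩ := hx
      have h1 : (0:ℝ) < 1 - x^2 := by nlinarith
      have hne : Real.sqrt (1 - x^2) ≠ 0 := (Real.sqrt_pos.2 h1).ne'
      have hsq : Real.sqrt (1 - x^2) ^ 2 = 1 - x^2 := Real.sq_sqrt h1.le
      have hd1 : HasDerivAt Real.arcsin (1 / Real.sqrt (1 - x^2)) x :=
        Real.hasDerivAt_arcsin (by nlinarith) (by nlinarith)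
      have hinner : HasDerivAt (fun y : ℝ => 1 - y^2) (-(2*x)) x := by
        simpa using ((hasDerivAt_pow 2 x).const_sub 1)
      have hd2 : HasDerivAt (fun y : ℝ => Real.sqrt (1 - y^2))
          (1 / (2 * Real.sqrt (1 - x^2)) * (-(2*x))) x :=
        (Real.hasDerivAt_sqrt h1.ne').comp x hinner
      have hd3 : HasDerivAt (fun y : ℝ => (5/2 - y/2)) (-(1/2)) x := by
        simpa using ((hasDerivAt_id x).div_const 2).const_sub (5/2)
      have hF : HasDerivAt F1
          (3/2 * (1 / Real.sqrt (1 - x^2)) +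
            ((-(1/2)) * Real.sqrt (1 - x^2) +
             (5/2 - x/2) * (1 / (2 * Real.sqrt (1 - x^2)) * (-(2*x))))) x := by
        exact ((hd1.const_mul (3/2 : ℝ)).add (hd3.mul hd2))
      convert hF using 1
      · rfl
      · rfl
      field_simp
      nlinarith [hsq]
    · exact integrable1
  rw [key]
  have ha : Real.arcsin (1/2) = Real.pi / 6 := by
    rw [show (1/2 : ℝ) = Real.sin (Real.pi/6) by rw [Real.sin_pi_div_six]]
    exact Real.arcsin_sin (by linarith [Real.pi_pos]) (by linarith [Real.pi_pos])
  have hs : Real.sqrt (1 - (1/2:ℝ)^2) = Real.sqrt 3 / 2 := by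
    rw [show (1 : ℝ) - (1/2:ℝ)^2 = 3/2^2 by norm_num, Real.sqrt_div' 3 (by norm_num), Real.sqrt_sq (by norm_num : (0:ℝ) ≤ 2)]
  unfold F1
  rw [ha, hs, Real.arcsin_neg_one]
  norm_num
  ring

noncomputable def G1 (t : ℝ) : ℝ := t^2/2 + 2 * Real.sqrt (1 - t^2)

lemma sqrt3_lt_two : Real.sqrt 3 < 2 := by
  rw [show (2:ℝ) = Real.sqrt 4 by rw [show (4:ℝ) = 2^2 by norm_num, Real.sqrt_sq (by norm_num : (0:ℝ) ≤ 2)]]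
  exact Real.sqrt_lt_sqrt (by norm_num) (by norm_num)

lemma integral2 : (∫ t in (0 : ℝ)..(Real.sqrt 3 / 2), t * (1 - 2 / Real.sqrt (1 - t ^ 2)))
    = -(5/8) := by
  have hs3 : (0:ℝ) ≤ Real.sqrt 3 / 2 := by positivity
  have hsub : ∀ x ∈ Set.uIcc (0:ℝ) (Real.sqrt 3 / 2), (0:ℝ) < 1 - x^2 := by
    intro x hx
    rw [Set.uIcc_of_le hs3] at hx
    obtain ⟨h0, h1⟩ := hx
    have : x < 1 := lt_of_le_of_lt h1 (by linarith [sqrt3_lt_two])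
    nlinarith
  have key : (∫ t in (0 : ℝ)..(Real.sqrt 3 / 2), t * (1 - 2 / Real.sqrt (1 - t ^ 2)))
      = G1 (Real.sqrt 3 / 2) - G1 0 := by
    apply integral_eq_sub_of_hasDerivAt
    · intro x hx
      have h1 : (0:ℝ) < 1 - x^2 := hsub x hx
      have hne : Real.sqrt (1 - x^2) ≠ 0 := (Real.sqrt_pos.2 h1).ne'
      have hsq : Real.sqrt (1 - x^2) ^ 2 = 1 - x^2 := Real.sq_sqrt h1.le
      have hinner : HasDerivAt (fun y : ℝ => 1 - y^2) (-(2*x)) x := by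
        simpa using ((hasDerivAt_pow 2 x).const_sub 1)
      have hd2 : HasDerivAt (fun y : ℝ => Real.sqrt (1 - y^2))
          (1 / (2 * Real.sqrt (1 - x^2)) * (-(2*x))) x :=
        (Real.hasDerivAt_sqrt h1.ne').comp x hinner
      have hG : HasDerivAt G1
          (2*x^1/2 + 2 * (1 / (2 * Real.sqrt (1 - x^2)) * (-(2*x)))) x :=
        ((hasDerivAt_pow 2 x).div_const 2).add (hd2.const_mul 2)
      convert hG using 1
      · rfl
      · rfl
      field_simp
      ring
    · apply ContinuousOn.intervalIntegrable
      apply ContinuousOn.mul continuousOn_id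
      apply ContinuousOn.sub continuousOn_const
      apply ContinuousOn.div continuousOn_const
      · exact (Real.continuous_sqrt.comp (by continuity)).continuousOn
      · intro x hx
        exact (Real.sqrt_pos.2 (hsub x hx)).ne'
  rw [key]
  unfold G1
  have h1 : (Real.sqrt 3 / 2)^2 = 3/4 := by
    rw [div_pow, Real.sq_sqrt (by norm_num : (0:ℝ) ≤ 3)]; norm_num
  rw [h1]
  have h2 : Real.sqrt (1 - (3:ℝ)/4) = 1/2 := by
    rw [show (1:ℝ) - 3/4 = (1/2)^2 by norm_num, Real.sqrt_sq (by norm_num : (0:ℝ) ≤ 1/2)]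
  rw [h2]
  norm_num [Real.sqrt_one]
theorem grushin_double_bubble_comparison (v k h : ℝ) (hv : 0 < v)
    (hk : k = -((8 * Real.pi + 9 * Real.sqrt 3) / (12 * v)) ^ ((1 : ℝ) / 3))
    (hh : h = (9 / (4 * v)) ^ ((1 : ℝ) / 3)) :
    (2 / k ^ 2) *
        (∫ t in (-1 : ℝ)..(1 / 2), (2 - t) * (1 / 2 - t) / Real.sqrt (1 - t ^ 2)) =
      (9 * Real.sqrt 3 + 8 * Real.pi) ^ ((1 : ℝ) / 3) *
        ((3 : ℝ) / 2) ^ ((2 : ℝ) / 3) * v ^ ((2 : ℝ) / 3) ∧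
    (2 / h ^ 2) *
        ((2 * ∫ t in (0 : ℝ)..Real.pi, Real.sin t) +
          ∫ t in (0 : ℝ)..(Real.sqrt 3 / 2),
            t * (1 - 2 / Real.sqrt (1 - t ^ 2))) =
      3 * ((3 : ℝ) / 2) ^ ((2 : ℝ) / 3) * v ^ ((2 : ℝ) / 3) ∧
    27 < 9 * Real.sqrt 3 + 8 * Real.pi ∧
    3 * ((3 : ℝ) / 2) ^ ((2 : ℝ) / 3) * v ^ ((2 : ℝ) / 3) <
      (9 * Real.sqrt 3 + 8 * Real.pi) ^ ((1 : ℝ) / 3) *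
        ((3 : ℝ) / 2) ^ ((2 : ℝ) / 3) * v ^ ((2 : ℝ) / 3) := by
  have hs3 : (0:ℝ) ≤ Real.sqrt 3 := Real.sqrt_nonneg 3
  have hsq3 : Real.sqrt 3 ^ 2 = 3 := Real.sq_sqrt (by norm_num)
  have hpi := Real.pi_gt_three
  have hA : (0:ℝ) < 9 * Real.sqrt 3 + 8 * Real.pi := by nlinarith
  have h27 : (27:ℝ) < 9 * Real.sqrt 3 + 8 * Real.pi := by nlinarith
  have hX : (0:ℝ) < (8 * Real.pi + 9 * Real.sqrt 3) / (12 * v) := by positivity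
  have hY : (0:ℝ) < 9 / (4 * v) := by positivity
  have hk2 : k^2 = ((8 * Real.pi + 9 * Real.sqrt 3) / (12 * v)) ^ ((2:ℝ)/3) := by
    rw [hk, neg_pow, ← Real.rpow_natCast (_ ^ ((1:ℝ)/3)) 2, ← Real.rpow_mul hX.le]
    norm_num
  have hh2 : h^2 = (9 / (4 * v)) ^ ((2:ℝ)/3) := by
    rw [hh, ← Real.rpow_natCast (_ ^ ((1:ℝ)/3)) 2, ← Real.rpow_mul hY.le]
    norm_num
  have hk2pos : 0 < k^2 := by rw [hk2]; exact Real.rpow_pos_of_pos hX _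
  have hh2pos : 0 < h^2 := by rw [hh2]; exact Real.rpow_pos_of_pos hY _
  -- goal 1 algebra
  have goal1 : (2 / k ^ 2) * (Real.pi + 9 * Real.sqrt 3 / 8) =
      (9 * Real.sqrt 3 + 8 * Real.pi) ^ ((1 : ℝ) / 3) *
        ((3 : ℝ) / 2) ^ ((2 : ℝ) / 3) * v ^ ((2 : ℝ) / 3) := by
    apply cube_inj
    · have : (0:ℝ) < Real.pi + 9 * Real.sqrt 3 / 8 := by nlinarith
      positivity
    · positivity
    · have hk6 : (k^2)^3 = ((8 * Real.pi + 9 * Real.sqrt 3) / (12 * v))^2 := by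
        rw [hk2]; exact rpow23_cube hX.le
      simp only [mul_pow]
      rw [rpow13_cube hA.le, rpow23_cube (by norm_num : (0:ℝ) ≤ 3/2),
        rpow23_cube hv.le, div_pow, hk6]
      have h12v : (12 * v) ≠ 0 := by positivity
      have hA' : (8 * Real.pi + 9 * Real.sqrt 3) ≠ 0 := by nlinarith
      field_simp
      ring
  -- goal 2 algebra
  have goal2 : (2 / h ^ 2) * (27/8 : ℝ) =
      3 * ((3 : ℝ) / 2) ^ ((2 : ℝ) / 3) * v ^ ((2 : ℝ) / 3) := by
    apply cube_inj
    · positivity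
    · positivity
    · have hh6 : (h^2)^3 = (9 / (4 * v))^2 := by rw [hh2]; exact rpow23_cube hY.le
      simp only [mul_pow]
      rw [rpow23_cube (by norm_num : (0:ℝ) ≤ 3/2), rpow23_cube hv.le, div_pow, hh6]
      have h4v : (4 * v) ≠ 0 := by positivity
      field_simp
      ring
  -- goal 4
  have goal4 : 3 * ((3 : ℝ) / 2) ^ ((2 : ℝ) / 3) * v ^ ((2 : ℝ) / 3) <
      (9 * Real.sqrt 3 + 8 * Real.pi) ^ ((1 : ℝ) / 3) *
        ((3 : ℝ) / 2) ^ ((2 : ℝ) / 3) * v ^ ((2 : ℝ) / 3) := by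
    have h3lt : (3:ℝ) < (9 * Real.sqrt 3 + 8 * Real.pi) ^ ((1 : ℝ) / 3) := by
      have := Real.rpow_lt_rpow (by norm_num : (0:ℝ) ≤ 27) h27 (by norm_num : (0:ℝ) < 1/3)
      have h27c : (27:ℝ)^((1:ℝ)/3) = 3 := by
        rw [show (27:ℝ) = 3^(3:ℕ) by norm_num, ← Real.rpow_natCast (3:ℝ) 3,
          ← Real.rpow_mul (by norm_num : (0:ℝ) ≤ 3)]
        norm_num
      linarith [h27c ▸ this]
    have c1 : (0:ℝ) < ((3 : ℝ) / 2) ^ ((2 : ℝ) / 3) := Real.rpow_pos_of_pos (by norm_num) _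
    have c2 : (0:ℝ) < v ^ ((2 : ℝ) / 3) := Real.rpow_pos_of_pos hv _
    exact mul_lt_mul_of_pos_right (mul_lt_mul_of_pos_right h3lt c1) c2
  have hsin : (∫ t in (0 : ℝ)..Real.pi, Real.sin t) = 2 := by
    rw [integral_sin]; norm_num
  refine ⟨?_, ?_, h27, goal4⟩
  · rw [integral1]
    exact goal1
  · rw [hsin, integral2]
    norm_num
    exact goal2
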